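/- (Theorem 2.3, symmetry of weighted (h,q)-Genocchi polynomials) Let q be a real number with 0 < q < 1, let α > 0 be real, let h be a positive integer, let x ≥ 0 be real, let a and b be odd positive integers, and let m be a positive integer. Then [2]_{q^b} · [a]_{q^α}^{m-1} · ∑_{i=0}^{a-1} (-1)^i q^{ibh} G̃_{m,q^a}^{(α,h)}(bx + bi/a) = [2]_{q^a} · [b]_{q^α}^{m-1} · ∑_{i=0}^{b-1} (-1)^i q^{iah} G̃_{m,q^b}^{(α,h)}(ax + ai/b). -/

import Mathlib

/-- The `q`-number `[x]_q = (1 - q^x)/(1 - q)` (real exponent, via `rpow`). -/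
noncomputable def qnum (q x : ℝ) : ℝ := (1 - q ^ x) / (1 - q)

/-- The weighted `(h,q)`-Genocchi polynomial
`G̃_{n,q}^{(α,h)}(x) = n·[2]_q·∑_{m≥0} (-1)^m q^{mh} [m+x]_{q^α}^{n-1}`
(for `n = 0` the prefactor `n` makes it `0`). -/
noncomputable def hqGenocchi (q α : ℝ) (h n : ℕ) (x : ℝ) : ℝ :=
  (n : ℝ) * qnum q 2 *
    ∑' m : ℕ, (-1 : ℝ) ^ m * q ^ (m * h) * (qnum (q ^ α) ((m : ℝ) + x)) ^ (n - 1)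

lemma qnum_abs_le {Q : ℝ} (hQ0 : 0 < Q) (hQ1 : Q < 1) {t : ℝ} (ht : 0 ≤ t) :
    |qnum Q t| ≤ 1 / (1 - Q) := by
  have h1 : 0 < 1 - Q := by linarith
  have h2 : Q ^ t ≤ 1 := Real.rpow_le_one hQ0.le hQ1.le ht
  have h3 : 0 ≤ Q ^ t := Real.rpow_nonneg hQ0.le t
  rw [qnum, abs_div, abs_of_pos h1, abs_of_nonneg (by linarith)]
  gcongr
  linarith

/-- Geometric-type summability of the terms appearing in the Genocchi series. -/
lemma summable_term {q Q : ℝ} (hq0 : 0 < q) (hq1 : q < 1) (hQ0 : 0 < Q) (hQ1 : Q < 1)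
    (m : ℕ) (ε : ℕ → ℝ) (hε : ∀ n, |ε n| = 1) (c : ℕ → ℕ) (hc : ∀ n, n ≤ c n)
    (y : ℕ → ℝ) (hy : ∀ n, 0 ≤ y n) :
    Summable fun n : ℕ => ε n * q ^ c n * (qnum Q (y n)) ^ m := by
  apply Summable.of_norm_bounded
    ((summable_geometric_of_lt_one hq0.le hq1).mul_left ((1 / (1 - Q)) ^ m))
  intro n
  rw [Real.norm_eq_abs, abs_mul, abs_mul, hε n, one_mul, abs_pow (qnum Q (y n)) m,
    abs_of_nonneg (pow_nonneg hq0.le (c n))]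
  have h1 : q ^ c n ≤ q ^ n := pow_le_pow_of_le_one hq0.le hq1.le (hc n)
  have h2 : |qnum Q (y n)| ^ m ≤ (1 / (1 - Q)) ^ m :=
    pow_le_pow_left₀ (abs_nonneg _) (qnum_abs_le hQ0 hQ1 (hy n)) m
  calc q ^ c n * |qnum Q (y n)| ^ m
      ≤ q ^ n * (1 / (1 - Q)) ^ m := by
        apply mul_le_mul h1 h2 (pow_nonneg (abs_nonneg _) _) (pow_nonneg hq0.le _)
    _ = (1 / (1 - Q)) ^ m * q ^ n := by ring

/-- Multiplicativity of `q`-numbers: `[c]_Q · [y]_{Q^c} = [c y]_Q`. -/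
lemma qnum_mul {Q : ℝ} (hQ0 : 0 < Q) (hQ1 : Q < 1) {c : ℝ} (hc : 0 < c) (y : ℝ) :
    qnum Q c * qnum (Q ^ c) y = qnum Q (c * y) := by
  have hc1 : Q ^ c < 1 := Real.rpow_lt_one hQ0.le hQ1 hc
  have h1 : (1 : ℝ) - Q ≠ 0 := by linarith
  have h2 : (1 : ℝ) - Q ^ c ≠ 0 := by linarith
  unfold qnum
  rw [Real.rpow_mul hQ0.le]
  field_simp

/-- One side of Theorem 2.3, rewritten as a manifestly symmetric triple sum. -/
lemma genocchi_side (q α x : ℝ) (hq0 : 0 < q) (hq1 : q < 1) (hα : 0 < α) (h : ℕ) (hh : 0 < h)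
    (hx : 0 ≤ x) (a b : ℕ) (ha : 0 < a) (hb : 0 < b) (hbo : Odd b) (m : ℕ) :
    (qnum (q ^ α) (a : ℝ)) ^ (m - 1) *
        ∑ i ∈ Finset.range a, (-1 : ℝ) ^ i * q ^ (i * b * h) *
          hqGenocchi (q ^ a) α h m ((b : ℝ) * x + (b : ℝ) * (i : ℝ) / (a : ℝ))
    = (m : ℝ) * qnum (q ^ a) 2 *
        ∑' l : ℕ, ∑ i ∈ Finset.range a, ∑ j ∈ Finset.range b,
          (-1 : ℝ) ^ (i + j + l) * q ^ ((a * j + b * i + a * b * l) * h) *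
            (qnum (q ^ α) ((a : ℝ) * j + (b : ℝ) * i + (a : ℝ) * (b : ℝ) * l
              + (a : ℝ) * (b : ℝ) * x)) ^ (m - 1) := by
  haveI : NeZero b := ⟨hb.ne'⟩
  set Q : ℝ := q ^ α with hQdef
  have hQ0 : 0 < Q := Real.rpow_pos_of_pos hq0 α
  have hQ1 : Q < 1 := Real.rpow_lt_one hq0.le hq1 hα
  have hqa0 : (0 : ℝ) < q ^ a := pow_pos hq0 a
  have hqa1 : (q : ℝ) ^ a < 1 := pow_lt_one₀ hq0.le hq1 ha.ne'
  have haR : (0 : ℝ) < (a : ℝ) := by exact_mod_cast ha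
  -- base identification: (q^a)^α = Q^(a:ℝ)
  have EQa : ((q : ℝ) ^ a) ^ α = Q ^ (a : ℝ) := by
    rw [← Real.rpow_natCast q a, ← Real.rpow_mul hq0.le, mul_comm, hQdef,
      Real.rpow_mul hq0.le]
  -- the term after full reindexing
  set T : ℕ → ℕ → ℕ → ℝ := fun i j l =>
    (-1 : ℝ) ^ (i + j + l) * q ^ ((a * j + b * i + a * b * l) * h) *
      (qnum Q ((a : ℝ) * j + (b : ℝ) * i + (a : ℝ) * (b : ℝ) * l
        + (a : ℝ) * (b : ℝ) * x)) ^ (m - 1) with hTdef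
  -- the term after combining the q-numbers, before div/mod reindexing
  set u : ℕ → ℕ → ℝ := fun i n =>
    (-1 : ℝ) ^ (i + n) * q ^ ((a * n + b * i) * h) *
      (qnum Q ((a : ℝ) * n + (b : ℝ) * i + (a : ℝ) * (b : ℝ) * x)) ^ (m - 1) with hudef
  have hargu : ∀ i n : ℕ, (0 : ℝ) ≤ (a : ℝ) * n + (b : ℝ) * i + (a : ℝ) * (b : ℝ) * x := by
    intro i n; positivity
  have hargT : ∀ i j l : ℕ,
      (0 : ℝ) ≤ (a : ℝ) * j + (b : ℝ) * i + (a : ℝ) * (b : ℝ) * l + (a : ℝ) * (b : ℝ) * x := by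
    intro i j l; positivity
  -- summability of u i
  have hSu : ∀ i : ℕ, Summable (u i) := by
    intro i
    apply summable_term hq0 hq1 hQ0 hQ1 (m - 1) (fun n => (-1 : ℝ) ^ (i + n))
      (fun n => by rw [abs_pow, abs_neg, abs_one, one_pow])
      (fun n => (a * n + b * i) * h)
      (fun n => by
        calc n = n * 1 := (mul_one n).symm
        _ ≤ (a * n + b * i) * h := by
            apply Nat.mul_le_mul _ hh
            calc n = 1 * n := (one_mul n).symm
            _ ≤ a * n := Nat.mul_le_mul_right n ha
            _ ≤ a * n + b * i := Nat.le_add_right _ _)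
      _ (hargu i)
  -- summability of T i j
  have hST : ∀ i j : ℕ, Summable (fun l => T i j l) := by
    intro i j
    apply summable_term hq0 hq1 hQ0 hQ1 (m - 1) (fun l => (-1 : ℝ) ^ (i + j + l))
      (fun l => by rw [abs_pow, abs_neg, abs_one, one_pow])
      (fun l => (a * j + b * i + a * b * l) * h)
      (fun l => by
        calc l = 1 * l * 1 := by ring
        _ ≤ (a * j + b * i + a * b * l) * h := by
            apply Nat.mul_le_mul _ hh
            calc 1 * l ≤ a * b * l := Nat.mul_le_mul_right l (Nat.one_le_iff_ne_zero.2
              (Nat.mul_ne_zero ha.ne' hb.ne'))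
            _ ≤ a * j + b * i + a * b * l := Nat.le_add_left _ _)
      _ (hargT i j)
  -- Step 1: per-i identity:  c_i * (Qa^{m-1} * tsum) = ∑' l, ∑ j < b, T i j l
  have key : ∀ i : ℕ, i ∈ Finset.range a →
      (-1 : ℝ) ^ i * q ^ (i * b * h) *
        hqGenocchi (q ^ a) α h m ((b : ℝ) * x + (b : ℝ) * (i : ℝ) / (a : ℝ))
      * (qnum Q (a : ℝ)) ^ (m - 1)
      = (m : ℝ) * qnum (q ^ a) 2 * ∑' l : ℕ, ∑ j ∈ Finset.range b, T i j l := by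
    intro i _
    rw [hqGenocchi]
    set y : ℝ := (b : ℝ) * x + (b : ℝ) * (i : ℝ) / (a : ℝ) with hydef
    -- first: fold everything into a single tsum of u i
    have step1 : (-1 : ℝ) ^ i * q ^ (i * b * h) *
        ((m : ℝ) * qnum (q ^ a) 2 *
          ∑' n : ℕ, (-1 : ℝ) ^ n * (q ^ a) ^ (n * h) *
            (qnum ((q ^ a : ℝ) ^ α) ((n : ℝ) + y)) ^ (m - 1))
        * (qnum Q (a : ℝ)) ^ (m - 1)
        = (m : ℝ) * qnum (q ^ a) 2 * ∑' n : ℕ, u i n := by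
      have hpt : ∀ n : ℕ,
          ((-1 : ℝ) ^ i * q ^ (i * b * h) * (qnum Q (a : ℝ)) ^ (m - 1)) *
            ((-1 : ℝ) ^ n * (q ^ a) ^ (n * h) *
              (qnum ((q ^ a : ℝ) ^ α) ((n : ℝ) + y)) ^ (m - 1)) = u i n := by
        intro n
        have e1 : qnum Q (a : ℝ) ^ (m - 1) * qnum ((q ^ a : ℝ) ^ α) ((n : ℝ) + y) ^ (m - 1)
            = (qnum Q ((a : ℝ) * ((n : ℝ) + y))) ^ (m - 1) := by
          rw [EQa, ← mul_pow, qnum_mul hQ0 hQ1 haR]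
        have e2 : (a : ℝ) * ((n : ℝ) + y)
            = (a : ℝ) * n + (b : ℝ) * i + (a : ℝ) * (b : ℝ) * x := by
          rw [hydef]; field_simp; ring
        have e3 : ((q : ℝ) ^ a) ^ (n * h) = q ^ (a * (n * h)) := (pow_mul q a (n * h)).symm
        have e4 : (q : ℝ) ^ (i * b * h) * q ^ (a * (n * h)) = q ^ ((a * n + b * i) * h) := by
          rw [← pow_add]; congr 1; ring
        have e5 : (-1 : ℝ) ^ i * (-1 : ℝ) ^ n = (-1 : ℝ) ^ (i + n) := by rw [← pow_add]
        rw [hudef]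
        dsimp only
        rw [← e2, ← e1, ← e4, ← e5, e3]
        ring
      calc (-1 : ℝ) ^ i * q ^ (i * b * h) *
          ((m : ℝ) * qnum (q ^ a) 2 *
            ∑' n : ℕ, (-1 : ℝ) ^ n * (q ^ a) ^ (n * h) *
              (qnum ((q ^ a : ℝ) ^ α) ((n : ℝ) + y)) ^ (m - 1))
          * (qnum Q (a : ℝ)) ^ (m - 1)
          = (m : ℝ) * qnum (q ^ a) 2 *
            (((-1 : ℝ) ^ i * q ^ (i * b * h) * (qnum Q (a : ℝ)) ^ (m - 1)) *
              ∑' n : ℕ, (-1 : ℝ) ^ n * (q ^ a) ^ (n * h) *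
                (qnum ((q ^ a : ℝ) ^ α) ((n : ℝ) + y)) ^ (m - 1)) := by ring
        _ = (m : ℝ) * qnum (q ^ a) 2 *
            ∑' n : ℕ, ((-1 : ℝ) ^ i * q ^ (i * b * h) * (qnum Q (a : ℝ)) ^ (m - 1)) *
              ((-1 : ℝ) ^ n * (q ^ a) ^ (n * h) *
                (qnum ((q ^ a : ℝ) ^ α) ((n : ℝ) + y)) ^ (m - 1)) := by
            congr 1; exact tsum_mul_left.symm
        _ = (m : ℝ) * qnum (q ^ a) 2 * ∑' n : ℕ, u i n := by
            congr 1; exact tsum_congr hpt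
    rw [step1]
    -- second: div/mod reindexing of the tsum of u i
    congr 1
    have he : ∀ p : ℕ × Fin b, (Nat.divModEquiv b).symm p = p.1 * b + (p.2 : ℕ) :=
      fun p => rfl
    have hre : ∑' n : ℕ, u i n = ∑' p : ℕ × Fin b, u i (p.1 * b + (p.2 : ℕ)) := by
      rw [← Equiv.tsum_eq (Nat.divModEquiv b).symm (u i)]
      exact tsum_congr fun p => by rw [he]
    have hsp : Summable (fun p : ℕ × Fin b => u i (p.1 * b + (p.2 : ℕ))) := by
      have h2 := (Equiv.summable_iff (Nat.divModEquiv b).symm (f := u i)).2 (hSu i)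
      exact h2.congr fun p => by simp only [Function.comp_apply, he]
    have hpt2 : ∀ (l : ℕ) (j : Fin b), u i (l * b + (j : ℕ)) = T i (j : ℕ) l := by
      intro l j
      rw [hudef, hTdef]
      dsimp only
      have hlb : (-1 : ℝ) ^ (l * b) = (-1 : ℝ) ^ l := by
        rw [mul_comm l b, pow_mul, hbo.neg_one_pow]
      have s1 : (-1 : ℝ) ^ (i + (l * b + (j : ℕ))) = (-1 : ℝ) ^ (i + (j : ℕ) + l) := by
        rw [pow_add, pow_add, pow_add, pow_add, hlb]
        ring
      have s2 : (a * (l * b + (j : ℕ)) + b * i) = (a * (j : ℕ) + b * i + a * b * l) := by ring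
      have s3 : (a : ℝ) * ((l * b + (j : ℕ) : ℕ) : ℝ) + (b : ℝ) * i + (a : ℝ) * (b : ℝ) * x
          = (a : ℝ) * (j : ℕ) + (b : ℝ) * i + (a : ℝ) * (b : ℝ) * l
            + (a : ℝ) * (b : ℝ) * x := by push_cast; ring
      rw [s1, s2, s3]
    rw [hre, Summable.tsum_prod hsp]
    apply tsum_congr
    intro l
    rw [tsum_fintype]
    rw [show (∑ j : Fin b, u i (l * b + (j : ℕ))) = ∑ j : Fin b, T i (j : ℕ) l from
      Finset.sum_congr rfl fun j _ => hpt2 l j]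
    exact Fin.sum_univ_eq_sum_range (fun j => T i j l) b
  -- Step 2: assemble
  calc (qnum Q (a : ℝ)) ^ (m - 1) *
      ∑ i ∈ Finset.range a, (-1 : ℝ) ^ i * q ^ (i * b * h) *
        hqGenocchi (q ^ a) α h m ((b : ℝ) * x + (b : ℝ) * (i : ℝ) / (a : ℝ))
      = ∑ i ∈ Finset.range a, ((-1 : ℝ) ^ i * q ^ (i * b * h) *
          hqGenocchi (q ^ a) α h m ((b : ℝ) * x + (b : ℝ) * (i : ℝ) / (a : ℝ))
          * (qnum Q (a : ℝ)) ^ (m - 1)) := by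
        rw [Finset.mul_sum]; exact Finset.sum_congr rfl fun i _ => by ring
    _ = ∑ i ∈ Finset.range a, (m : ℝ) * qnum (q ^ a) 2 *
          ∑' l : ℕ, ∑ j ∈ Finset.range b, T i j l := Finset.sum_congr rfl key
    _ = (m : ℝ) * qnum (q ^ a) 2 *
          ∑ i ∈ Finset.range a, ∑' l : ℕ, ∑ j ∈ Finset.range b, T i j l := by
        rw [Finset.mul_sum]
    _ = (m : ℝ) * qnum (q ^ a) 2 *
          ∑' l : ℕ, ∑ i ∈ Finset.range a, ∑ j ∈ Finset.range b, T i j l := by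
        congr 1
        exact (Summable.tsum_finsetSum fun i _ => summable_sum fun j _ => hST i j).symm

theorem stmt5 (q α x : ℝ) (hq0 : 0 < q) (hq1 : q < 1) (hα : 0 < α) (h : ℕ) (hh : 0 < h)
    (hx : 0 ≤ x) (a b : ℕ) (ha : 0 < a) (hb : 0 < b) (hao : Odd a) (hbo : Odd b)
    (m : ℕ) (hm : 0 < m) :
    qnum (q ^ b) 2 * (qnum (q ^ α) (a : ℝ)) ^ (m - 1) *
        ∑ i ∈ Finset.range a, (-1 : ℝ) ^ i * q ^ (i * b * h) *
          hqGenocchi (q ^ a) α h m ((b : ℝ) * x + (b : ℝ) * (i : ℝ) / (a : ℝ)) =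
      qnum (q ^ a) 2 * (qnum (q ^ α) (b : ℝ)) ^ (m - 1) *
        ∑ i ∈ Finset.range b, (-1 : ℝ) ^ i * q ^ (i * a * h) *
          hqGenocchi (q ^ b) α h m ((a : ℝ) * x + (a : ℝ) * (i : ℝ) / (b : ℝ)) := by
  have hab := genocchi_side q α x hq0 hq1 hα h hh hx a b ha hb hbo m
  have hba := genocchi_side q α x hq0 hq1 hα h hh hx b a hb ha hao m
  calc qnum (q ^ b) 2 * (qnum (q ^ α) (a : ℝ)) ^ (m - 1) *
      ∑ i ∈ Finset.range a, (-1 : ℝ) ^ i * q ^ (i * b * h) *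
        hqGenocchi (q ^ a) α h m ((b : ℝ) * x + (b : ℝ) * (i : ℝ) / (a : ℝ))
      = qnum (q ^ b) 2 * ((qnum (q ^ α) (a : ℝ)) ^ (m - 1) *
        ∑ i ∈ Finset.range a, (-1 : ℝ) ^ i * q ^ (i * b * h) *
          hqGenocchi (q ^ a) α h m ((b : ℝ) * x + (b : ℝ) * (i : ℝ) / (a : ℝ))) := by ring
    _ = qnum (q ^ b) 2 * ((m : ℝ) * qnum (q ^ a) 2 *
          ∑' l : ℕ, ∑ i ∈ Finset.range a, ∑ j ∈ Finset.range b,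
            (-1 : ℝ) ^ (i + j + l) * q ^ ((a * j + b * i + a * b * l) * h) *
              (qnum (q ^ α) ((a : ℝ) * j + (b : ℝ) * i + (a : ℝ) * (b : ℝ) * l
                + (a : ℝ) * (b : ℝ) * x)) ^ (m - 1)) := by rw [hab]
    _ = qnum (q ^ a) 2 * ((m : ℝ) * qnum (q ^ b) 2 *
          ∑' l : ℕ, ∑ i ∈ Finset.range b, ∑ j ∈ Finset.range a,
            (-1 : ℝ) ^ (i + j + l) * q ^ ((b * j + a * i + b * a * l) * h) *
              (qnum (q ^ α) ((b : ℝ) * j + (a : ℝ) * i + (b : ℝ) * (a : ℝ) * l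
                + (b : ℝ) * (a : ℝ) * x)) ^ (m - 1)) := by
        rw [show ∀ A B C D : ℝ, A * (B * C * D) = C * (B * A * D) from fun A B C D => by ring]
        congr 2
        apply tsum_congr
        intro l
        rw [Finset.sum_comm]
        apply Finset.sum_congr rfl
        intro j _
        apply Finset.sum_congr rfl
        intro i _
        have e1 : (a * j + b * i + a * b * l) * h = (b * i + a * j + b * a * l) * h := by ring
        have e2 : i + j + l = j + i + l := by ring
        have e3 : (a : ℝ) * j + (b : ℝ) * i + (a : ℝ) * (b : ℝ) * l + (a : ℝ) * (b : ℝ) * x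
            = (b : ℝ) * i + (a : ℝ) * j + (b : ℝ) * (a : ℝ) * l + (b : ℝ) * (a : ℝ) * x := by
          ring
        rw [e1, e2, e3]
    _ = qnum (q ^ a) 2 * ((qnum (q ^ α) (b : ℝ)) ^ (m - 1) *
        ∑ i ∈ Finset.range b, (-1 : ℝ) ^ i * q ^ (i * a * h) *
          hqGenocchi (q ^ b) α h m ((a : ℝ) * x + (a : ℝ) * (i : ℝ) / (b : ℝ))) := by
        rw [hba]
    _ = qnum (q ^ a) 2 * (qnum (q ^ α) (b : ℝ)) ^ (m - 1) *
        ∑ i ∈ Finset.range b, (-1 : ℝ) ^ i * q ^ (i * a * h) *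
          hqGenocchi (q ^ b) α h m ((a : ℝ) * x + (a : ℝ) * (i : ℝ) / (b : ℝ)) := by ring
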